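/- With c(n) as above, |c(n)| ≥ 2^{−2^n + n + 1} for all n ≥ 1; in particular |c(n)| ≥ 2^{−2^n} and c(n) ≠ 0. -/

import Mathlib

open Complex

theorem stmt_3 (lam : ℂ) (hlam : lam = 1 ∨ lam = -1) (c : ℕ → ℂ)
    (h0 : c 0 = 1)
    (hrec : ∀ n, 1 ≤ n → c n = -2 * I * lam * (c (n - 1)) ^ 2 / ((2 : ℂ) ^ n - 1)) :
    ∀ n : ℕ, 1 ≤ n →
      (2 : ℝ) ^ (-((2 : ℤ) ^ n) + (n : ℤ) + 1) ≤ ‖c n‖ ∧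
      (2 : ℝ) ^ (-((2 : ℤ) ^ n)) ≤ ‖c n‖ ∧ c n ≠ 0 := by
  have hlam1 : ‖lam‖ = 1 := by rcases hlam with h | h <;> simp [h]
  have habsrec : ∀ n : ℕ, 1 ≤ n →
      ‖c n‖ = 2 * (‖c (n - 1)‖) ^ 2 / ((2 : ℝ) ^ n - 1) := by
    intro n hn
    have hcast : ((2 : ℂ) ^ n - 1) = (((2 : ℝ) ^ n - 1 : ℝ) : ℂ) := by push_cast; ring
    have hnn : (0 : ℝ) ≤ (2 : ℝ) ^ n - 1 := by
      have : (1 : ℝ) ≤ 2 ^ n := one_le_pow₀ (by norm_num)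
      linarith
    rw [hrec n hn, norm_div, hcast, Complex.norm_real, Real.norm_eq_abs, _root_.abs_of_nonneg hnn]
    rw [norm_mul, norm_mul, norm_pow, hlam1]
    simp
  have key : ∀ n : ℕ, 1 ≤ n →
      (2 : ℝ) ^ (-((2 : ℤ) ^ n) + (n : ℤ) + 1) ≤ ‖c n‖ := by
    intro n hn
    induction n, hn using Nat.le_induction with
    | base =>
        rw [habsrec 1 le_rfl]
        norm_num [h0]
    | succ n hn ih =>
        have hApos : (0 : ℝ) < (2 : ℝ) ^ (-((2 : ℤ) ^ n) + (n : ℤ) + 1) :=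
          zpow_pos (by norm_num) _
        have h2n : (1 : ℝ) ≤ (2 : ℝ) ^ n := one_le_pow₀ (by norm_num)
        have hden : (0 : ℝ) < (2 : ℝ) ^ (n + 1) - 1 := by
          rw [pow_succ]; nlinarith
        rw [habsrec (n + 1) (by omega)]
        simp only [Nat.add_sub_cancel]
        rw [le_div_iff₀ hden]
        have hid : (2 : ℝ) ^ (-((2 : ℤ) ^ (n + 1)) + ((n : ℤ) + 1) + 1) *
            (2 : ℝ) ^ (n + 1) =
            2 * ((2 : ℝ) ^ (-((2 : ℤ) ^ n) + (n : ℤ) + 1)) ^ 2 := by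
          set e : ℤ := -((2 : ℤ) ^ n) + (n : ℤ) + 1 with he
          have h1 : ((2 : ℝ) ^ e) ^ 2 = (2 : ℝ) ^ (e + e) := by
            rw [pow_two, ← zpow_add₀ (two_ne_zero : (2:ℝ) ≠ 0)]
          have h2 : (2 : ℝ) * (2 : ℝ) ^ (e + e) = (2 : ℝ) ^ (1 + (e + e)) := by
            rw [zpow_add₀ (two_ne_zero : (2:ℝ) ≠ 0) 1 (e + e), zpow_one]
          rw [h1, h2, ← zpow_natCast (2 : ℝ) (n + 1), ← zpow_add₀ (two_ne_zero)]
          congr 1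
          push_cast [he]
          ring
        have hAnn : (0 : ℝ) ≤ ‖c n‖ := norm_nonneg _
        have hEpos : (0 : ℝ) < (2 : ℝ) ^ (-((2 : ℤ) ^ (n + 1)) + ((n : ℤ) + 1) + 1) :=
          zpow_pos (by norm_num) _
        push_cast
        nlinarith [pow_le_pow_left₀ hApos.le ih 2, hid, hEpos]
  intro n hn
  have h1 := key n hn
  have h2 : (2 : ℝ) ^ (-((2 : ℤ) ^ n)) ≤ (2 : ℝ) ^ (-((2 : ℤ) ^ n) + (n : ℤ) + 1) := by
    apply zpow_le_zpow_right₀ (by norm_num)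
    have : (0 : ℤ) ≤ (n : ℤ) := Int.natCast_nonneg n
    linarith
  refine ⟨h1, h2.trans h1, ?_⟩
  intro h
  rw [h] at h1
  simp at h1
  have := zpow_pos (show (0:ℝ) < 2 from by norm_num) (-((2 : ℤ) ^ n) + (n : ℤ) + 1)
  linarith
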